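/- Let Z be a finite alphabet with q := |Z| ≥ 2, let Ω be a finite set, and let C : Ω → List Z be an injective map all of whose codewords are nonempty strings. Writing ℓ_w := length(C(w)), the modified lengths satisfy Kraft's inequality: ∑_{w ∈ Ω} q^{−(ℓ_w + 2·⌊log_q(ℓ_w + q − 1)⌋)} ≤ 1. -/

import Mathlib

private def kl (q ℓ : ℕ) : ℕ := Nat.log q (ℓ + q - 1)

private noncomputable def gf (q ℓ : ℕ) : ℝ :=
  q * ((q : ℝ) ^ kl q ℓ)⁻¹ -
    ((ℓ : ℝ) + q - (q : ℝ) ^ kl q ℓ) * ((q : ℝ) ^ (2 * kl q ℓ))⁻¹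

private lemma gf_zero {q : ℕ} (hq : 2 ≤ q) : gf q 0 = 1 := by
  have hk : kl q 0 = 0 := Nat.log_eq_zero_iff.mpr (Or.inl (by omega))
  have hq1 : (1:ℝ) ≤ q := by exact_mod_cast (by omega : 1 ≤ q)
  simp [gf, hk]

private lemma gf_nonneg {q : ℕ} (hq : 2 ≤ q) (ℓ : ℕ) : 0 ≤ gf q ℓ := by
  set k := kl q ℓ with hk
  have h1 : ℓ + q - 1 < q ^ (k + 1) := Nat.lt_pow_succ_log_self (by omega) _
  have h2 : ℓ + q ≤ q ^ (k + 1) := by omega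
  have h2' : (ℓ : ℝ) + q ≤ (q:ℝ) ^ (k+1) := by exact_mod_cast h2
  have hq0 : (0:ℝ) < q := by positivity
  have hqk : (0:ℝ) < (q:ℝ) ^ k := by positivity
  have key : ((q:ℝ) ^ (k+1) - (q:ℝ)^k) * ((q:ℝ) ^ (2*k))⁻¹
      = q * ((q:ℝ)^k)⁻¹ - ((q:ℝ)^k)⁻¹ := by
    rw [pow_succ, two_mul, pow_add]
    field_simp
  have hmono : ((ℓ : ℝ) + q - (q : ℝ) ^ k) * ((q : ℝ) ^ (2 * k))⁻¹
      ≤ ((q:ℝ) ^ (k+1) - (q:ℝ)^k) * ((q:ℝ) ^ (2*k))⁻¹ := by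
    gcongr ?_ * _
    linarith
  have hik : (0:ℝ) ≤ ((q:ℝ)^k)⁻¹ := by positivity
  have : gf q ℓ ≥ ((q:ℝ)^k)⁻¹ := by
    rw [gf, ← hk]
    linarith [key, hmono]
  linarith

private lemma gf_step {q : ℕ} (hq : 2 ≤ q) (n : ℕ) :
    ((q : ℝ) ^ (2 * kl q (n + 1)))⁻¹ = gf q n - gf q (n + 1) := by
  have hq0 : (0:ℝ) < q := by positivity
  have hk1 : kl q (n + 1) = Nat.log q (n + q) := by
    unfold kl; congr 1; omega
  have hk0 : kl q n = Nat.log q (n + q - 1) := rfl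
  set k := Nat.log q (n + q) with hkdef
  set k' := Nat.log q (n + q - 1) with hk'def
  have hle : k' ≤ k := Nat.log_mono_right (by omega)
  rcases eq_or_lt_of_le hle with heq | hlt
  · -- same block
    rw [gf, gf, hk0, hk1, ← heq]
    push_cast
    ring
  · -- boundary: n + q = q ^ k
    have hm : q ^ k ≤ n + q := Nat.pow_log_le_self q (by omega)
    have hm2 : n + q - 1 < q ^ (k' + 1) := Nat.lt_pow_succ_log_self (by omega) _
    have hpow : q ^ (k' + 1) ≤ q ^ k := Nat.pow_le_pow_right (by omega) (by omega)
    have hmeq : n + q = q ^ k := by omega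
    have hk1' : 1 ≤ k := by
      by_contra h
      interval_cases k
      simp at hmeq; omega
    -- k' = k - 1
    have hlow : q ^ (k - 1) ≤ n + q - 1 := by
      have : q ^ (k - 1) < q ^ k := Nat.pow_lt_pow_right (by omega) (by omega)
      omega
    have hk'ge : k - 1 ≤ k' := by
      rw [hk'def]
      exact (Nat.le_log_iff_pow_le (by omega) (by omega)).mpr hlow
    have hk'eq : k' = k - 1 := by omega
    obtain ⟨j, hkj⟩ : ∃ j, k = j + 1 := ⟨k - 1, by omega⟩
    have hj : k' = j := by omega
    have hncast : (n : ℝ) = (q:ℝ) ^ (j+1) - q := by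
      have h5 : ((n + q : ℕ) : ℝ) = ((q ^ (j+1) : ℕ) : ℝ) := by
        rw [hmeq, hkj]
      push_cast at h5
      linarith
    rw [gf, gf, hk0, hk1, hj, hkj]
    have hqj : (q:ℝ) ^ j ≠ 0 := by positivity
    push_cast
    rw [hncast, pow_succ, two_mul, two_mul, pow_add, pow_add, pow_add]
    field_simp
    ring

set_option maxHeartbeats 1000000 in
/-- Modified lengths of a non-singular code satisfy Kraft's inequality. -/
theorem stmt_1 {Z Ω : Type*} [Fintype Z] [Fintype Ω]
    (hq : 2 ≤ Fintype.card Z)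
    (C : Ω → List Z) (hC : Function.Injective C) (hne : ∀ w, C w ≠ []) :
    ∑ w : Ω, (Fintype.card Z : ℝ) ^
        (-(((C w).length : ℤ) +
            2 * ⌊Real.logb (Fintype.card Z)
                  (((C w).length : ℝ) + (Fintype.card Z : ℝ) - 1)⌋)) ≤ 1 := by
  classical
  set q := Fintype.card Z with hqdef
  have hq0 : (0:ℝ) < q := by positivity
  have hq1 : (1:ℝ) < q := by exact_mod_cast (by omega : 1 < q)
  set L := Finset.univ.sup (fun w : Ω => (C w).length) with hL
  have hlen : ∀ w : Ω, 1 ≤ (C w).length := fun w => List.length_pos_iff.mpr (hne w)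
  -- Step 1: rewrite each term
  have hterm : ∀ w : Ω, (q : ℝ) ^
        (-(((C w).length : ℤ) +
            2 * ⌊Real.logb q (((C w).length : ℝ) + (q : ℝ) - 1)⌋))
      = ((q : ℝ) ^ ((C w).length + 2 * kl q (C w).length))⁻¹ := by
    intro w
    set ℓ := (C w).length with hℓ
    have hcast : ((ℓ:ℝ) + q - 1) = ((ℓ + q - 1 : ℕ) : ℝ) := by
      rw [Nat.cast_sub (by omega : 1 ≤ ℓ + q), Nat.cast_add, Nat.cast_one]
    rw [hcast, Real.floor_logb_natCast (by positivity), Int.log_natCast, zpow_neg]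
    congr 1
  calc ∑ w : Ω, (q : ℝ) ^
        (-(((C w).length : ℤ) +
            2 * ⌊Real.logb q (((C w).length : ℝ) + (q : ℝ) - 1)⌋))
      = ∑ w : Ω, ((q : ℝ) ^ ((C w).length + 2 * kl q (C w).length))⁻¹ :=
        Finset.sum_congr rfl fun w _ => hterm w
    _ = ∑ ℓ ∈ Finset.Icc 1 L, ∑ w ∈ Finset.univ.filter (fun w => (C w).length = ℓ),
          ((q : ℝ) ^ ((C w).length + 2 * kl q (C w).length))⁻¹ :=
        (Finset.sum_fiberwise_of_maps_to
          (fun w _ => Finset.mem_Icc.mpr ⟨hlen w, Finset.le_sup (f := fun w : Ω => (C w).length) (Finset.mem_univ w)⟩) _).symm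
    _ ≤ ∑ ℓ ∈ Finset.Icc 1 L, ((q : ℝ) ^ (2 * kl q ℓ))⁻¹ := by
        apply Finset.sum_le_sum
        intro ℓ hℓmem
        have hconst : ∑ w ∈ Finset.univ.filter (fun w => (C w).length = ℓ),
            ((q : ℝ) ^ ((C w).length + 2 * kl q (C w).length))⁻¹
            = (Finset.univ.filter (fun w => (C w).length = ℓ)).card
                * ((q : ℝ) ^ (ℓ + 2 * kl q ℓ))⁻¹ := by
          rw [Finset.sum_congr rfl (fun w hw => by
            rw [(Finset.mem_filter.mp hw).2]), Finset.sum_const, nsmul_eq_mul]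
        rw [hconst]
        have hcard : (Finset.univ.filter (fun w : Ω => (C w).length = ℓ)).card ≤ q ^ ℓ := by
          rw [← Fintype.card_subtype]
          calc Fintype.card {w : Ω // (C w).length = ℓ}
              ≤ Fintype.card (List.Vector Z ℓ) :=
                Fintype.card_le_of_injective (fun w => ⟨C w.1, w.2⟩)
                  (fun a b h => Subtype.ext (hC (congrArg Subtype.val h)))
            _ = q ^ ℓ := card_vector ℓ
        have hpos : (0:ℝ) < ((q : ℝ) ^ (ℓ + 2 * kl q ℓ))⁻¹ := by positivity
        calc ((Finset.univ.filter (fun w : Ω => (C w).length = ℓ)).card : ℝ)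
              * ((q : ℝ) ^ (ℓ + 2 * kl q ℓ))⁻¹
            ≤ (q:ℝ) ^ ℓ * ((q : ℝ) ^ (ℓ + 2 * kl q ℓ))⁻¹ := by
              gcongr
              exact_mod_cast hcard
          _ = ((q : ℝ) ^ (2 * kl q ℓ))⁻¹ := by
              rw [pow_add]
              field_simp
    _ = ∑ i ∈ Finset.range L, ((q : ℝ) ^ (2 * kl q (i + 1)))⁻¹ := by
        rw [← Finset.Ico_add_one_right_eq_Icc, Finset.sum_Ico_eq_sum_range]
        exact Finset.sum_congr (by simp) (fun i _ => by rw [add_comm])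
    _ = gf q 0 - gf q L := by
        rw [← Finset.sum_range_sub' (gf q) L]
        exact Finset.sum_congr rfl fun i _ => gf_step hq i
    _ ≤ 1 := by
        rw [gf_zero hq]
        linarith [gf_nonneg hq L]
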